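/- Let u : ℝ^{2C}_{++} → ℝ be lower unbounded and U(x₀,…,x_S) = Σ_{s=1}^S a_s u(x₀,x_s) with a_s ∈ (0,1), Σ a_s = 1. Then U satisfies the four classical conditions — (i) C², (ii) strictly positive gradient everywhere, (iii) v·D²U(x)·v < 0 for all nonzero v, (iv) all upper level sets closed in ℝ^{C(S+1)} — if and only if u satisfies the analogous four conditions on ℝ^{2C}_{++}. -/

import Mathlib

/-- Second derivative quadratic form of `f` on the set `s`: v ↦ v·D²f(x)·v. -/
noncomputable def hessQF {E : Type*} [NormedAddCommGroup E] [NormedSpace ℝ E]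
    (f : E → ℝ) (s : Set E) (x v : E) : ℝ :=
  fderivWithin ℝ (fun y => fderivWithin ℝ f s y v) s x v

open Filter


lemma hessQF_zero {E : Type*} [NormedAddCommGroup E] [NormedSpace ℝ E]
    (f : E → ℝ) (s : Set E) (x : E) : hessQF f s x 0 = 0 := by
  unfold hessQF
  exact ContinuousLinearMap.map_zero _

lemma hessQF_of_isOpen {E : Type*} [NormedAddCommGroup E] [NormedSpace ℝ E]
    (f : E → ℝ) {T : Set E} (hT : IsOpen T) {x : E} (hx : x ∈ T) (v : E) :
    hessQF f T x v = fderiv ℝ (fun y => fderiv ℝ f y v) x v := by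
  unfold hessQF
  rw [fderivWithin_of_isOpen hT hx]
  have ev : (fun y => fderivWithin ℝ f T y v) =ᶠ[nhds x] (fun y => fderiv ℝ f y v) := by
    filter_upwards [hT.mem_nhds hx] with y hy
    rw [fderivWithin_of_isOpen hT hy]
  rw [ev.fderiv_eq]

theorem transport {E F : Type*} [NormedAddCommGroup E] [NormedSpace ℝ E]
    [NormedAddCommGroup F] [NormedSpace ℝ F] {n : ℕ} (a : Fin n → ℝ) (f : E → ℝ)
    {T : Set E} (hT : IsOpen T) (hf : ContDiffOn ℝ 2 f T)
    (L : Fin n → (F →L[ℝ] E)) {S : Set F} (hS : IsOpen S)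
    (hmaps : ∀ s, Set.MapsTo (L s) S T) :
    ContDiffOn ℝ 2 (fun y => ∑ s, a s * f (L s y)) S ∧
    (∀ x ∈ S, ∀ v, fderivWithin ℝ (fun y => ∑ s, a s * f (L s y)) S x v
        = ∑ s, a s * fderivWithin ℝ f T (L s x) (L s v)) ∧
    (∀ x ∈ S, ∀ v, hessQF (fun y => ∑ s, a s * f (L s y)) S x v
        = ∑ s, a s * hessQF f T (L s x) (L s v)) := by
  have hdiff : ∀ p ∈ T, DifferentiableAt ℝ f p := fun p hp =>
    (hf.contDiffAt (hT.mem_nhds hp)).differentiableAt (by norm_num)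
  have hfd : ∀ p ∈ T, DifferentiableAt ℝ (fderiv ℝ f) p := fun p hp =>
    ((((hf.contDiffAt (hT.mem_nhds hp)).fderiv_right (m := 1) (by norm_num)).differentiableAt one_ne_zero))
  have key1 : ∀ x ∈ S, ∀ v, fderiv ℝ (fun y => ∑ s, a s * f (L s y)) x v
      = ∑ s, a s * fderiv ℝ f (L s x) (L s v) := by
    intro x hx v
    have h : HasFDerivAt (fun y => ∑ s, a s * f (L s y))
        (∑ s, a s • ((fderiv ℝ f (L s x)).comp (L s))) x := by
      apply HasFDerivAt.fun_sum
      intro s _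
      exact ((hdiff _ (hmaps s hx)).hasFDerivAt.comp x (L s).hasFDerivAt).const_mul (a s)
    rw [h.fderiv]
    simp [ContinuousLinearMap.sum_apply]
  refine ⟨?_, ?_, ?_⟩
  · apply ContDiffOn.sum
    intro s _
    exact contDiffOn_const.mul (hf.comp ((L s).contDiff.contDiffOn) (hmaps s))
  · intro x hx v
    rw [fderivWithin_of_isOpen hS hx, key1 x hx v]
    refine Finset.sum_congr rfl fun s _ => ?_
    rw [fderivWithin_of_isOpen hT (hmaps s hx)]
  · intro x hx v
    rw [hessQF_of_isOpen _ hS hx]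
    have ev : (fun y => fderiv ℝ (fun y' => ∑ s, a s * f (L s y')) y v)
        =ᶠ[nhds x] (fun y => ∑ s, a s * fderiv ℝ f (L s y) (L s v)) := by
      filter_upwards [hS.mem_nhds hx] with y hy
      exact key1 y hy v
    rw [ev.fderiv_eq]
    have h : HasFDerivAt (fun y => ∑ s, a s * (fderiv ℝ f (L s y)) (L s v))
        (∑ s, a s • ((fderiv ℝ (fun p => (fderiv ℝ f p) (L s v)) (L s x)).comp (L s))) x := by
      apply HasFDerivAt.fun_sum
      intro s _
      have hd2 : DifferentiableAt ℝ (fun p => (fderiv ℝ f p) (L s v)) (L s x) :=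
        (hfd _ (hmaps s hx)).clm_apply (differentiableAt_const _)
      exact (hd2.hasFDerivAt.comp x (L s).hasFDerivAt).const_mul (a s)
    rw [h.fderiv]
    simp only [ContinuousLinearMap.sum_apply, ContinuousLinearMap.smul_apply,
      ContinuousLinearMap.comp_apply, ContinuousLinearMap.coe_coe, smul_eq_mul]
    refine Finset.sum_congr rfl fun s _ => ?_
    rw [hessQF_of_isOpen f hT (hmaps s hx)]

/-- Theorem: For u lower unbounded and U(x₀,…,x_S) = ∑ₛ aₛ u(x₀,x_s),
U satisfies (i) C², (ii) strictly positive gradient, (iii) negative definite Hessian,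
(iv) closed upper level sets, if and only if u satisfies the analogous conditions. -/
theorem stmt11 (C S : ℕ) (hC : 1 ≤ C) (hS : 1 ≤ S)
    (a : Fin S → ℝ) (ha : ∀ s, a s ∈ Set.Ioo (0:ℝ) 1) (hsum : ∑ s, a s = 1)
    (u : ((Fin C → ℝ) × (Fin C → ℝ)) → ℝ)
    (P2 : Set ((Fin C → ℝ) × (Fin C → ℝ)))
    (hP2 : P2 = {p | (∀ i, 0 < p.1 i) ∧ (∀ i, 0 < p.2 i)})
    (PG : Set (Fin (S+1) → (Fin C → ℝ)))
    (hPG : PG = {x | ∀ k i, 0 < x k i})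
    (U : (Fin (S+1) → (Fin C → ℝ)) → ℝ)
    (hU : ∀ x, U x = ∑ s : Fin S, a s * u (x 0, x s.succ))
    (hlb : ∀ r : ℝ, ∃ p ∈ P2, u p < r) :
    (ContDiffOn ℝ 2 U PG ∧
     (∀ x ∈ PG, ∀ (k : Fin (S+1)) (i : Fin C),
        0 < fderivWithin ℝ U PG x (Pi.single k (Pi.single i 1))) ∧
     (∀ v : Fin (S+1) → (Fin C → ℝ), v ≠ 0 → ∀ x ∈ PG, hessQF U PG x v < 0) ∧
     (∀ xb ∈ PG, IsClosed {x | x ∈ PG ∧ U xb ≤ U x})) ↔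
    (ContDiffOn ℝ 2 u P2 ∧
     (∀ p ∈ P2, (∀ i, 0 < fderivWithin ℝ u P2 p (Pi.single i 1, 0)) ∧
        (∀ i, 0 < fderivWithin ℝ u P2 p (0, Pi.single i 1))) ∧
     (∀ w : (Fin C → ℝ) × (Fin C → ℝ), w ≠ 0 → ∀ p ∈ P2, hessQF u P2 p w < 0) ∧
     (∀ zb ∈ P2, IsClosed {z | z ∈ P2 ∧ u zb ≤ u z})) := by
  classical
  have hSne : Nonempty (Fin S) := ⟨⟨0, hS⟩⟩
  set s₁ : Fin S := ⟨0, hS⟩ with hs₁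
  -- the linear maps
  set L : Fin S → ((Fin (S+1) → (Fin C → ℝ)) →L[ℝ] ((Fin C → ℝ) × (Fin C → ℝ))) :=
    fun s => (ContinuousLinearMap.proj 0).prod (ContinuousLinearMap.proj s.succ) with hL
  set M : (((Fin C → ℝ) × (Fin C → ℝ)) →L[ℝ] (Fin (S+1) → (Fin C → ℝ))) :=
    ContinuousLinearMap.pi (fun k => if k = 0 then ContinuousLinearMap.fst ℝ _ _
      else ContinuousLinearMap.snd ℝ _ _) with hM
  have hLapp : ∀ s x, L s x = (x 0, x s.succ) := fun s x => rfl
  have hM0 : ∀ z, M z 0 = z.1 := by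
    intro z
    simp only [hM, ContinuousLinearMap.pi_apply, if_pos rfl]
    rfl
  have hMsucc : ∀ z (s : Fin S), M z s.succ = z.2 := by
    intro z s
    simp only [hM, ContinuousLinearMap.pi_apply, if_neg (Fin.succ_ne_zero s)]
    rfl
  -- openness
  have hP2open : IsOpen P2 := by
    have he : {p : (Fin C → ℝ) × (Fin C → ℝ) | (∀ i, 0 < p.1 i) ∧ (∀ i, 0 < p.2 i)}
        = (⋂ i : Fin C, {p : (Fin C → ℝ) × (Fin C → ℝ) | 0 < p.1 i})
          ∩ (⋂ i : Fin C, {p : (Fin C → ℝ) × (Fin C → ℝ) | 0 < p.2 i}) := by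
      ext p; simp [Set.mem_iInter]
    rw [hP2, he]
    refine IsOpen.inter ?_ ?_ <;> refine isOpen_iInter_of_finite fun i => ?_
    · exact isOpen_lt continuous_const ((continuous_apply i).comp continuous_fst)
    · exact isOpen_lt continuous_const ((continuous_apply i).comp continuous_snd)
  have hPGopen : IsOpen PG := by
    have he : {x : Fin (S+1) → (Fin C → ℝ) | ∀ k i, 0 < x k i}
        = ⋂ k : Fin (S+1), ⋂ i : Fin C, {x : Fin (S+1) → (Fin C → ℝ) | 0 < x k i} := by
      ext x; simp [Set.mem_iInter]
    rw [hPG, he]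
    exact isOpen_iInter_of_finite fun k => isOpen_iInter_of_finite fun i =>
      isOpen_lt continuous_const ((continuous_apply i).comp (continuous_apply k))
  -- maps-to
  have hmapsL : ∀ s, Set.MapsTo (L s) PG P2 := by
    intro s x hx
    rw [hPG] at hx
    rw [hP2, hLapp]
    exact ⟨fun i => hx 0 i, fun i => hx s.succ i⟩
  have hmapsM : Set.MapsTo M P2 PG := by
    intro z hz
    rw [hP2] at hz
    rw [hPG]
    intro k i
    rcases Fin.eq_zero_or_eq_succ k with rfl | ⟨t, rfl⟩
    · rw [hM0]; exact hz.1 i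
    · rw [hMsucc]; exact hz.2 i
  have hMmemP2 : ∀ z, M z ∈ PG → z ∈ P2 := by
    intro z hz
    rw [hPG] at hz
    rw [hP2]
    refine ⟨fun i => ?_, fun i => ?_⟩
    · have := hz 0 i; rwa [hM0] at this
    · have := hz s₁.succ i; rwa [hMsucc] at this
  -- key function identities
  have haux : ∀ z, U (M z) = u z := by
    intro z
    rw [hU]
    have : ∀ s : Fin S, (M z 0, M z s.succ) = z := by
      intro s; rw [hM0, hMsucc]
    simp only [this]
    rw [← Finset.sum_mul, hsum, one_mul]
  have hUeq : U = fun y => ∑ s, a s * u (L s y) := by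
    funext x
    rw [hU]
    exact Finset.sum_congr rfl fun s _ => by rw [hLapp]
  have hueq : u = fun y => ∑ s : Fin 1, (fun _ : Fin 1 => (1:ℝ)) s * U ((fun _ : Fin 1 => M) s y) := by
    funext z
    simp [haux z]
  constructor
  · -- U conditions → u conditions
    rintro ⟨h1, h2, h3, h4⟩
    obtain ⟨hA, hB, hC⟩ := transport (fun _ : Fin 1 => (1:ℝ)) U hPGopen h1
      (fun _ : Fin 1 => M) hP2open (fun _ => hmapsM)
    refine ⟨?_, ?_, ?_, ?_⟩
    · rw [hueq]; exact hA
    · intro p hp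
      have hMp : M p ∈ PG := hmapsM hp
      constructor
      · intro i
        rw [hueq, hB p hp _]
        simp only [Fin.sum_univ_one, one_mul]
        have hMe : M ((Pi.single i 1 : Fin C → ℝ), (0 : Fin C → ℝ))
            = Pi.single (0 : Fin (S+1)) (Pi.single i 1) := by
          funext k
          rcases Fin.eq_zero_or_eq_succ k with rfl | ⟨t, rfl⟩
          · rw [hM0, Pi.single_eq_same]
          · rw [hMsucc, Pi.single_eq_of_ne (Fin.succ_ne_zero t)]
        rw [hMe]
        exact h2 (M p) hMp 0 i
      · intro i
        rw [hueq, hB p hp _]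
        simp only [Fin.sum_univ_one, one_mul]
        have hMe : M ((0 : Fin C → ℝ), (Pi.single i 1 : Fin C → ℝ))
            = ∑ t : Fin S, Pi.single (Fin.succ t) (Pi.single i 1) := by
          funext k
          rw [Finset.sum_apply]
          rcases Fin.eq_zero_or_eq_succ k with rfl | ⟨t, rfl⟩
          · rw [hM0]
            symm
            refine Finset.sum_eq_zero fun r _ => ?_
            exact Pi.single_eq_of_ne (Fin.succ_ne_zero r).symm _
          · rw [hMsucc]
            rw [Finset.sum_eq_single t]
            · rw [Pi.single_eq_same]
            · intro r _ hrt
              exact Pi.single_eq_of_ne (fun h => hrt (Fin.succ_injective _ h).symm) _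
            · intro h; exact absurd (Finset.mem_univ t) h
        rw [hMe, map_sum]
        refine Finset.sum_pos (fun t _ => h2 (M p) hMp t.succ i) Finset.univ_nonempty
    · intro w hw p hp
      rw [hueq, hC p hp w]
      simp only [Fin.sum_univ_one, one_mul]
      have hMw : M w ≠ 0 := by
        intro h0
        apply hw
        have h1' : w.1 = 0 := by rw [← hM0 w, h0]; rfl
        have h2' : w.2 = 0 := by rw [← hMsucc w s₁, h0]; rfl
        exact Prod.ext h1' h2'
      exact h3 (M w) hMw (M p) (hmapsM hp)
    · intro zb hzb
      have hset : {z | z ∈ P2 ∧ u zb ≤ u z}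
          = M ⁻¹' {x | x ∈ PG ∧ U (M zb) ≤ U x} := by
        ext z
        simp only [Set.mem_setOf_eq, Set.mem_preimage, haux]
        constructor
        · rintro ⟨hz, hle⟩; exact ⟨hmapsM hz, hle⟩
        · rintro ⟨hz, hle⟩; exact ⟨hMmemP2 z hz, hle⟩
      rw [hset]
      exact (h4 (M zb) (hmapsM hzb)).preimage M.continuous
  · -- u conditions → U conditions
    rintro ⟨h1, h2, h3, h4⟩
    obtain ⟨hA, hB, hC⟩ := transport a u hP2open h1 L hPGopen hmapsL
    -- the "goes to -infty near the boundary" lemma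
    have hbad : ∀ (q : (Fin C → ℝ) × (Fin C → ℝ)), q ∉ P2 →
        ∀ (g : ℕ → (Fin C → ℝ) × (Fin C → ℝ)), (∀ n, g n ∈ P2) →
        Tendsto g atTop (nhds q) → Tendsto (fun n => u (g n)) atTop atBot := by
      intro q hq g hg hgl
      rw [tendsto_atBot]
      intro b
      obtain ⟨zb, hzb, hzblt⟩ := hlb b
      have hcl := h4 zb hzb
      have hcompl : {z | z ∈ P2 ∧ u zb ≤ u z}ᶜ ∈ nhds q :=
        hcl.isOpen_compl.mem_nhds (fun hmem => hq hmem.1)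
      filter_upwards [hgl.eventually_mem hcompl] with n hn
      simp only [Set.mem_compl_iff, Set.mem_setOf_eq, not_and, not_le] at hn
      exact (hn (hg n)).le.trans hzblt.le
    refine ⟨?_, ?_, ?_, ?_⟩
    · rw [hUeq]; exact hA
    · intro x hx k i
      rw [hUeq, hB x hx _]
      induction k using Fin.cases with
      | zero =>
        have hLv : ∀ s : Fin S, L s (Pi.single (0 : Fin (S+1)) (Pi.single i 1))
            = ((Pi.single i 1 : Fin C → ℝ), (0 : Fin C → ℝ)) := by
          intro s
          rw [hLapp]
          rw [Pi.single_eq_same, Pi.single_eq_of_ne (Fin.succ_ne_zero s)]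
        simp only [hLv]
        refine Finset.sum_pos (fun s _ => mul_pos (ha s).1 ((h2 _ (hmapsL s hx)).1 i))
          Finset.univ_nonempty
      | succ t =>
        have hLv : ∀ s : Fin S, L s (Pi.single (Fin.succ t) (Pi.single i 1))
            = ((0 : Fin C → ℝ), if s = t then (Pi.single i 1 : Fin C → ℝ) else 0) := by
          intro s
          rw [hLapp, Prod.mk.injEq]
          refine ⟨Pi.single_eq_of_ne (Fin.succ_ne_zero t).symm _, ?_⟩
          by_cases hst : s = t
          · subst hst; rw [if_pos rfl, Pi.single_eq_same]
          · rw [if_neg hst]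
            exact Pi.single_eq_of_ne (fun h => hst (Fin.succ_injective _ h)) _
        simp only [hLv]
        rw [Finset.sum_eq_single t]
        · rw [if_pos rfl]
          exact mul_pos (ha t).1 ((h2 _ (hmapsL t hx)).2 i)
        · intro s _ hst
          rw [if_neg hst]
          have : ((0 : Fin C → ℝ), (0 : Fin C → ℝ)) = (0 : (Fin C → ℝ) × (Fin C → ℝ)) := rfl
          rw [this, ContinuousLinearMap.map_zero, mul_zero]
        · intro h; exact absurd (Finset.mem_univ t) h
    · intro v hv x hx
      rw [hUeq, hC x hx v]
      have hle : ∀ s : Fin S, a s * hessQF u P2 (L s x) (L s v) ≤ 0 := by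
        intro s
        by_cases h0 : L s v = 0
        · rw [h0, hessQF_zero, mul_zero]
        · exact (mul_neg_of_pos_of_neg (ha s).1 (h3 _ h0 _ (hmapsL s hx))).le
      have hex : ∃ s : Fin S, L s v ≠ 0 := by
        have : ∃ k, v k ≠ 0 := Function.ne_iff.mp hv
        obtain ⟨k, hk⟩ := this
        rcases Fin.eq_zero_or_eq_succ k with rfl | ⟨t, rfl⟩
        · exact ⟨s₁, fun h => hk (by rw [hLapp] at h; exact congrArg Prod.fst h)⟩
        · exact ⟨t, fun h => hk (by rw [hLapp] at h; exact congrArg Prod.snd h)⟩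
      obtain ⟨s₀, hs₀⟩ := hex
      have : ∑ s : Fin S, a s * hessQF u P2 (L s x) (L s v) < ∑ s : Fin S, (0:ℝ) :=
        Finset.sum_lt_sum (fun s _ => hle s)
          ⟨s₀, Finset.mem_univ s₀,
            mul_neg_of_pos_of_neg (ha s₀).1 (h3 _ hs₀ _ (hmapsL s₀ hx))⟩
      simpa using this
    · intro xb hxb
      rw [← isSeqClosed_iff_isClosed]
      intro seq p hmem hlim
      have hLs : ∀ s : Fin S, Tendsto (fun n => L s (seq n)) atTop (nhds (L s p)) :=
        fun s => ((L s).continuous.tendsto p).comp hlim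
      have hpPG : p ∈ PG := by
        by_contra hpn
        -- find a bad index
        have hbadidx : ∃ s : Fin S, L s p ∉ P2 := by
          simp only [hPG, Set.mem_setOf_eq, not_forall, not_lt] at hpn
          obtain ⟨k, i, hki⟩ := hpn
          rcases Fin.eq_zero_or_eq_succ k with rfl | ⟨t, rfl⟩
          · refine ⟨s₁, fun hmem' => ?_⟩
            rw [hP2, hLapp] at hmem'
            exact absurd (hmem'.1 i) (not_lt.mpr hki)
          · refine ⟨t, fun hmem' => ?_⟩
            rw [hP2, hLapp] at hmem'
            exact absurd (hmem'.2 i) (not_lt.mpr hki)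
        obtain ⟨s₀, hs₀⟩ := hbadidx
        -- each term eventually bounded above
        have hub : ∀ s : Fin S, ∃ c : ℝ, ∀ᶠ n in atTop, u (L s (seq n)) ≤ c := by
          intro s
          by_cases hqs : L s p ∈ P2
          · have hcont : ContinuousAt u (L s p) :=
              (h1.contDiffAt (hP2open.mem_nhds hqs)).continuousAt
            refine ⟨u (L s p) + 1, ?_⟩
            have htd : Tendsto (fun n => u (L s (seq n))) atTop (nhds (u (L s p))) :=
              (hcont.tendsto).comp (hLs s)
            exact (htd.eventually_lt_const (lt_add_one _)).mono fun n hn => hn.le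
          · exact ⟨0, (hbad _ hqs _ (fun n => hmapsL s (hmem n).1) (hLs s)).eventually
              (eventually_le_atBot 0)⟩
        choose c hc using hub
        set R : ℝ := ∑ s ∈ Finset.univ.erase s₀, a s * c s with hR
        have hbadlim : Tendsto (fun n => u (L s₀ (seq n))) atTop atBot :=
          hbad _ hs₀ _ (fun n => hmapsL s₀ (hmem n).1) (hLs s₀)
        have hev : ∀ᶠ n in atTop, U (seq n) ≤ a s₀ * u (L s₀ (seq n)) + R := by
          have hall : ∀ᶠ n in atTop, ∀ s ∈ Finset.univ.erase s₀, u (L s (seq n)) ≤ c s :=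
            (eventually_all_finset _).mpr fun s _ => hc s
          filter_upwards [hall] with n hn
          have hsplit : U (seq n) = a s₀ * u (L s₀ (seq n))
              + ∑ s ∈ Finset.univ.erase s₀, a s * u (L s (seq n)) := by
            rw [hU]
            exact (Finset.add_sum_erase _ _ (Finset.mem_univ s₀)).symm
          rw [hsplit, hR]
          refine add_le_add le_rfl (Finset.sum_le_sum fun s hs => ?_)
          exact mul_le_mul_of_nonneg_left (hn s hs) (ha s).1.le
        have hbot : Tendsto (fun n => a s₀ * u (L s₀ (seq n)) + R) atTop atBot :=
          tendsto_atBot_add_const_right _ R (hbadlim.const_mul_atBot (ha s₀).1)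
        have hevlt : ∀ᶠ n in atTop, a s₀ * u (L s₀ (seq n)) + R < U xb :=
          hbot.eventually (eventually_lt_atBot _)
        obtain ⟨n, hn1, hn2⟩ := (hev.and hevlt).exists
        exact lt_irrefl (U xb) (lt_of_le_of_lt ((hmem n).2.trans hn1) hn2)
      refine ⟨hpPG, ?_⟩
      have hUcont : ContinuousAt U p := by
        rw [hUeq]
        exact hA.continuousOn.continuousAt (hPGopen.mem_nhds hpPG)
      have hlimU : Tendsto (fun n => U (seq n)) atTop (nhds (U p)) :=
        (hUcont.tendsto).comp hlim
      exact ge_of_tendsto hlimU (Eventually.of_forall fun n => (hmem n).2)
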